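/- arXiv:1106.3984 — 2 statements merged into one kernel-verified Lean document; each statement's English description precedes it below -/
import Mathlib

section
/- Under the assumptions of Theorem 1 (GG identities and R generated from i.i.d. samples on the sphere of radius √q_k with the described value distribution), the conditioned array Q also satisfies the Ghirlanda–Guerra identities: for every n ≥ 2, bounded measurable f of the first n×n overlaps, and every p ≥ 1, E[f(Q^n) Q_{1,n+1}^p] = (1/n) E[f(Q^n)] E[Q_{1,2}^p] + (1/n) Σ_{l=2}^{n} E[f(Q^n) Q_{1,l}^p]. -/
open MeasureTheory
open scoped RealInnerProductSpace

/-- The event that the first `n` replicas are pairwise distinct. -/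
def distinctEvent {Ω X : Type*} (σ : ℕ → Ω → X) (n : ℕ) : Set Ω :=
  {ω | ∀ i j, i < n → j < n → i ≠ j → σ i ω ≠ σ j ω}



lemma clamp_eq {qk t : ℝ} (h : |t| ≤ qk) : max (-qk) (min qk t) = t := by
  rcases abs_le.mp h with ⟨h1, h2⟩
  rw [min_eq_right h2, max_eq_right h1]

def Dset (qk : ℝ) (m : ℕ) : Set (Fin m → Fin m → ℝ) :=
  {x | ∀ i j : Fin m, i ≠ j → x i j ≠ qk}

lemma measurable_eval {m : ℕ} (i j : Fin m) :
    Measurable fun x : Fin m → Fin m → ℝ => x i j :=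
  (measurable_pi_apply j).comp (measurable_pi_apply i)

lemma Dset_measurable (qk : ℝ) (m : ℕ) : MeasurableSet (Dset qk m) := by
  have h : Dset qk m
      = ⋂ i : Fin m, ⋂ j : Fin m, {x : Fin m → Fin m → ℝ | i ≠ j → x i j ≠ qk} := by
    ext x; simp [Dset, Set.mem_iInter]
  rw [h]
  refine MeasurableSet.iInter fun i => MeasurableSet.iInter fun j => ?_
  by_cases hij : i = j
  · have : {x : Fin m → Fin m → ℝ | i ≠ j → x i j ≠ qk} = Set.univ := by
      ext x; simp [hij]
    rw [this]; exact MeasurableSet.univ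
  · have : {x : Fin m → Fin m → ℝ | i ≠ j → x i j ≠ qk}
        = (fun x : Fin m → Fin m → ℝ => x i j) ⁻¹' ({qk}ᶜ) := by
      ext x; simp [hij]
    rw [this]; exact measurable_eval i j (measurableSet_singleton qk).compl

lemma Dset_perm {qk : ℝ} {m : ℕ} (τ : Equiv.Perm (Fin m)) (x : Fin m → Fin m → ℝ) :
    (fun i j => x (τ i) (τ j)) ∈ Dset qk m ↔ x ∈ Dset qk m := by
  constructor
  · intro h i j hij
    have := h (τ.symm i) (τ.symm j) (fun hc => hij (by simpa using congrArg τ hc))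
    simpa using this
  · intro h i j hij
    exact h (τ i) (τ j) (fun hc => hij (τ.injective hc))

lemma integrable_of_bdd {α : Type*} [MeasurableSpace α] {ν : Measure α} [IsFiniteMeasure ν]
    {F : α → ℝ} (hF : AEStronglyMeasurable F ν) (C : ℝ) (hC : ∀ x, |F x| ≤ C) :
    Integrable F ν :=
  Integrable.mono' (integrable_const C) hF
    (Filter.Eventually.of_forall fun x => by simpa [Real.norm_eq_abs] using hC x)

lemma abs_mul_le {f g : ℝ} {Cf Cg : ℝ} (hf : |f| ≤ Cf) (hg : |g| ≤ Cg) : |f * g| ≤ Cf * Cg := by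
  rw [abs_mul]
  exact mul_le_mul hf hg (abs_nonneg _) (le_trans (abs_nonneg _) hf)

lemma exch_integral {Ω : Type*} [MeasurableSpace Ω] (ℙ : Measure Ω)
    (R : ℕ → ℕ → Ω → ℝ) (hmeas : ∀ l l', Measurable (fun ω => R l l' ω))
    (hexch : ∀ (m : ℕ) (ρ : Equiv.Perm (Fin m)),
      Measure.map (fun ω => fun i j : Fin m => R (ρ i) (ρ j) ω) ℙ
        = Measure.map (fun ω => fun i j : Fin m => R i j ω) ℙ)
    (M : ℕ) (ρ : Equiv.Perm (Fin M)) (G : (Fin M → Fin M → ℝ) → ℝ) (hG : Measurable G) :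
    ∫ ω, G (fun i j : Fin M => R (ρ i) (ρ j) ω) ∂ℙ
      = ∫ ω, G (fun i j : Fin M => R i j ω) ∂ℙ := by
  have h1 : Measurable fun ω => fun i j : Fin M => R (ρ i) (ρ j) ω :=
    measurable_pi_lambda _ fun i => measurable_pi_lambda _ fun j => hmeas _ _
  have h2 : Measurable fun ω => fun i j : Fin M => R i j ω :=
    measurable_pi_lambda _ fun i => measurable_pi_lambda _ fun j => hmeas _ _
  rw [← integral_map h1.aemeasurable hG.aestronglyMeasurable,
    ← integral_map h2.aemeasurable hG.aestronglyMeasurable, hexch M ρ]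

/-- Lemma 2: the conditioned array `Q` (with law `μ` whose `n × n`
marginals are the conditional distributions given that all replicas are distinct) also
satisfies the Ghirlanda–Guerra identities, for moment functions `ψ(x) = x^p`, `p ≥ 1`. -/
theorem conditioned_array_satisfies_GG
    {Ω : Type*} [MeasurableSpace Ω] (ℙ : Measure Ω) [IsProbabilityMeasure ℙ]
    {H : Type*} [NormedAddCommGroup H] [InnerProductSpace ℝ H]
    (σ : ℕ → Ω → H) (R : ℕ → ℕ → Ω → ℝ) (qk pk : ℝ) (hpk1 : pk < 1)
    (hR : ∀ l l' ω, R l l' ω = ⟪σ l ω, σ l' ω⟫)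
    (hsphere : ∀ l ω, ⟪σ l ω, σ l ω⟫ = qk)
    (heq : ∀ l l', l ≠ l' → ∀ ω, (R l l' ω = qk ↔ σ l ω = σ l' ω))
    (hmeas : ∀ l l', Measurable (fun ω => R l l' ω))
    (hpk : ℙ {ω | R 0 1 ω = qk} = ENNReal.ofReal pk)
    (hexch : ∀ (m : ℕ) (ρ : Equiv.Perm (Fin m)),
      Measure.map (fun ω => fun i j : Fin m => R (ρ i) (ρ j) ω) ℙ
        = Measure.map (fun ω => fun i j : Fin m => R i j ω) ℙ)
    (hGG : ∀ m, 2 ≤ m → ∀ f : (Fin m → Fin m → ℝ) → ℝ, Measurable f →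
      (∃ C, ∀ x, |f x| ≤ C) → ∀ ψ : ℝ → ℝ, Measurable ψ → (∃ C, ∀ x, |ψ x| ≤ C) →
      ∫ ω, f (fun i j : Fin m => R i j ω) * ψ (R 0 m ω) ∂ℙ
        = (1 / m) * (∫ ω, f (fun i j : Fin m => R i j ω) ∂ℙ)
              * (∫ ω, ψ (R 0 1 ω) ∂ℙ)
          + (1 / m) * ∑ l ∈ Finset.Ico 1 m,
              ∫ ω, f (fun i j : Fin m => R i j ω) * ψ (R 0 l ω) ∂ℙ)
    (μ : Measure (ℕ → ℕ → ℝ)) [IsProbabilityMeasure μ]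
    (hμ : ∀ n, Measure.map (fun x => fun i j : Fin n => x i j) μ
      = (ℙ (distinctEvent σ n))⁻¹
          • Measure.map (fun ω => fun i j : Fin n => R i j ω)
              (ℙ.restrict (distinctEvent σ n))) :
    ∀ n, 2 ≤ n → ∀ f : (Fin n → Fin n → ℝ) → ℝ, Measurable f →
      (∃ C, ∀ x, |f x| ≤ C) → ∀ p : ℕ, 1 ≤ p →
      ∫ x, f (fun i j : Fin n => x i j) * (x 0 n) ^ p ∂μ
        = (1 / n) * (∫ x, f (fun i j : Fin n => x i j) ∂μ)
              * (∫ x, (x 0 1) ^ p ∂μ)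
          + (1 / n) * ∑ l ∈ Finset.Ico 1 n,
              ∫ x, f (fun i j : Fin n => x i j) * (x 0 l) ^ p ∂μ := by
  intro n hn f hf hfb p hp
  classical
  have hΩ : Nonempty Ω := by
    by_contra h
    rw [not_nonempty_iff] at h
    have h1 : (ℙ : Measure Ω) Set.univ = 1 := measure_univ
    rw [Set.univ_eq_empty_iff.mpr h, measure_empty] at h1
    exact zero_ne_one h1
  obtain ⟨ω0⟩ := hΩ
  have qk0 : 0 ≤ qk := hsphere 0 ω0 ▸ real_inner_self_nonneg
  have Rbd : ∀ l l' ω, |R l l' ω| ≤ qk := by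
    intro l l' ω
    rw [hR]
    have h1 : ‖σ l ω‖ = Real.sqrt qk := by
      rw [← Real.sqrt_sq (norm_nonneg (σ l ω))]
      congr 1
      rw [← real_inner_self_eq_norm_sq, hsphere]
    have h2 : ‖σ l' ω‖ = Real.sqrt qk := by
      rw [← Real.sqrt_sq (norm_nonneg (σ l' ω))]
      congr 1
      rw [← real_inner_self_eq_norm_sq, hsphere]
    calc |⟪σ l ω, σ l' ω⟫| ≤ ‖σ l ω‖ * ‖σ l' ω‖ := abs_real_inner_le_norm _ _
      _ = qk := by rw [h1, h2, Real.mul_self_sqrt qk0]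
  -- characterization of distinctEvent
  have hDchar : ∀ (m : ℕ) (ω : Ω),
      ω ∈ distinctEvent σ m ↔ (fun i j : Fin m => R i j ω) ∈ Dset qk m := by
    intro m ω
    constructor
    · intro hA i j hij hq
      have hvne : (i : ℕ) ≠ (j : ℕ) := fun h => hij (Fin.ext h)
      exact hA i j i.isLt j.isLt hvne ((heq i j hvne ω).1 hq)
    · intro hD i j hi hj hij hσ
      exact hD ⟨i, hi⟩ ⟨j, hj⟩ (fun h => hij (congrArg Fin.val h)) ((heq i j hij ω).2 hσ)
  have RmMeas : ∀ m, Measurable fun ω => fun i j : Fin m => R i j ω := fun m =>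
    measurable_pi_lambda _ fun i => measurable_pi_lambda _ fun j => hmeas _ _
  have hAmeas : ∀ m, MeasurableSet (distinctEvent σ m) := by
    intro m
    have h : distinctEvent σ m = (fun ω => fun i j : Fin m => R i j ω) ⁻¹' (Dset qk m) :=
      Set.ext (hDchar m)
    rw [h]; exact (RmMeas m) (Dset_measurable qk m)
  have hAmono : ∀ m, distinctEvent σ (m + 1) ⊆ distinctEvent σ m := by
    intro m ω hω i j hi hj hij
    exact hω i j (Nat.lt_succ_of_lt hi) (Nat.lt_succ_of_lt hj) hij
  -- pr
  set pr : ℝ := (ℙ {ω | R 0 1 ω = qk}).toReal with hprdef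
  have hpr0 : 0 ≤ pr := ENNReal.toReal_nonneg
  have hpr1 : pr < 1 := by
    rw [hprdef, hpk, ENNReal.toReal_ofReal']
    exact max_lt hpk1 one_pos
  have hsetmeas : MeasurableSet {ω | R 0 1 ω = qk} := hmeas 0 1 (measurableSet_singleton qk)

  -- ψ0 indicator of {qk}
  set ψ0 : ℝ → ℝ := Set.indicator ({qk} : Set ℝ) (fun _ => (1:ℝ)) with hψ0def
  have hψ0meas : Measurable ψ0 := Measurable.indicator measurable_const (measurableSet_singleton qk)
  have hψ0bdd : ∀ x, |ψ0 x| ≤ 1 := by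
    intro x
    by_cases h : x = qk <;> simp [hψ0def, Set.indicator_apply, h]
  have hψ0qk : ψ0 qk = 1 := by simp [hψ0def]
  have hψ0ne : ∀ {x}, x ≠ qk → ψ0 x = 0 := by
    intro x h; simp [hψ0def, Set.indicator_apply, h]
  have hψ0int : ∫ ω, ψ0 (R 0 1 ω) ∂ℙ = pr := by
    have h : (fun ω => ψ0 (R 0 1 ω))
        = Set.indicator {ω | R 0 1 ω = qk} (fun _ => (1 : ℝ)) := by
      ext ω
      by_cases h : R 0 1 ω = qk <;>
        simp [hψ0def, Set.indicator_apply, h]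
    rw [h, integral_indicator_const (1 : ℝ) hsetmeas, smul_eq_mul, mul_one]
    rfl
  -- integrability helper
  have hInt : ∀ (F : Ω → ℝ), Measurable F → ∀ C : ℝ, (∀ ω, |F ω| ≤ C) → Integrable F ℙ :=
    fun F hF C hC => integrable_of_bdd hF.aestronglyMeasurable C hC
  -- K0
  have K0 : ∀ (m : ℕ), 2 ≤ m → ∀ (h : (Fin m → Fin m → ℝ) → ℝ), Measurable h →
      (∃ C, ∀ x, |h x| ≤ C) → (∀ x, x ∉ Dset qk m → h x = 0) →
      ∫ ω, h (fun i j : Fin m => R i j ω) * ψ0 (R 0 m ω) ∂ℙ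
        = pr / m * ∫ ω, h (fun i j : Fin m => R i j ω) ∂ℙ := by
    intro m hm h hmeas' hbdd hsupp
    have hmain := hGG m hm h hmeas' hbdd ψ0 hψ0meas ⟨1, hψ0bdd⟩
    have hz : ∀ l ∈ Finset.Ico 1 m,
        ∫ ω, h (fun i j : Fin m => R i j ω) * ψ0 (R 0 l ω) ∂ℙ = 0 := by
      intro l hl
      obtain ⟨hl1, hlm⟩ := Finset.mem_Ico.mp hl
      have hzz : ∀ ω, h (fun i j : Fin m => R i j ω) * ψ0 (R 0 l ω) = 0 := by
        intro ω
        by_cases hc : R 0 l ω = qk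
        · have hD : (fun i j : Fin m => R i j ω) ∉ Dset qk m := by
            intro hD
            exact hD ⟨0, by omega⟩ ⟨l, hlm⟩
              (fun hcon => by
                have := congrArg Fin.val hcon
                simp at this
                omega) hc
          rw [hsupp _ hD, zero_mul]
        · rw [hψ0ne hc, mul_zero]
      calc ∫ ω, h (fun i j : Fin m => R i j ω) * ψ0 (R 0 l ω) ∂ℙ
          = ∫ _ω, (0:ℝ) ∂ℙ := integral_congr_ae (Filter.Eventually.of_forall hzz)
        _ = 0 := integral_zero _ _
    rw [Finset.sum_congr rfl hz, Finset.sum_const_zero, hψ0int] at hmain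
    rw [hmain]; ring
  -- K1
  have K1 : ∀ (m : ℕ), 2 ≤ m → ∀ (h : (Fin m → Fin m → ℝ) → ℝ), Measurable h →
      (∃ C, ∀ x, |h x| ≤ C) → (∀ x, x ∉ Dset qk m → h x = 0) → ∀ l : ℕ, l < m →
      ∫ ω, h (fun i j : Fin m => R i j ω) * ψ0 (R l m ω) ∂ℙ
        = pr / m * ∫ ω, h (fun i j : Fin m => R i j ω) ∂ℙ := by
    intro m hm h hmeas' hbdd hsupp l hlm
    haveI : NeZero m := ⟨by omega⟩
    obtain ⟨C, hC⟩ := hbdd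
    set lF : Fin m := ⟨l, hlm⟩ with hlFdef
    set τ : Equiv.Perm (Fin m) := Equiv.swap 0 lF with hτdef
    set ρ : Equiv.Perm (Fin (m+1)) := Equiv.swap (Fin.castSucc 0) (Fin.castSucc lF) with hρdef
    have hval : ∀ i : Fin m, ((ρ (Fin.castSucc i) : Fin (m+1)) : ℕ) = ((τ i : Fin m) : ℕ) := by
      intro i
      rw [hρdef, hτdef, (Fin.castSucc_injective m).swap_apply, Fin.coe_castSucc]
    have hlast : ρ (Fin.last m) = Fin.last m := by
      rw [hρdef]
      exact Equiv.swap_apply_of_ne_of_ne (Fin.castSucc_lt_last 0).ne' (Fin.castSucc_lt_last lF).ne'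
    have hswapl : ρ (Fin.castSucc lF) = Fin.castSucc 0 := Equiv.swap_apply_right _ _
    -- permuted h
    set hτ : (Fin m → Fin m → ℝ) → ℝ := fun x => h (fun i j => x (τ i) (τ j)) with hhτdef
    have hτmeas : Measurable hτ :=
      hmeas'.comp (measurable_pi_lambda _ fun i => measurable_pi_lambda _ fun j =>
        measurable_eval (τ i) (τ j))
    have hτbdd : ∀ x, |hτ x| ≤ C := fun x => hC _
    have hτsupp : ∀ x, x ∉ Dset qk m → hτ x = 0 := by
      intro x hx
      exact hsupp _ (fun hmem => hx ((Dset_perm τ x).mp hmem))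
    -- exchange at level m+1
    set G : (Fin (m+1) → Fin (m+1) → ℝ) → ℝ := fun y =>
      h (fun i j : Fin m => y (Fin.castSucc i) (Fin.castSucc j)) * ψ0 (y (Fin.castSucc lF) (Fin.last m))
      with hGdef
    have hGmeas : Measurable G := by
      apply Measurable.mul
      · exact hmeas'.comp (measurable_pi_lambda _ fun i => measurable_pi_lambda _ fun j =>
          measurable_eval _ _)
      · exact hψ0meas.comp (measurable_eval _ _)
    have e1 := exch_integral ℙ R hmeas hexch (m+1) ρ G hGmeas
    -- LHS of e1
    have e2 : ∀ ω, G (fun i j : Fin (m+1) => R (ρ i) (ρ j) ω)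
        = hτ (fun i j : Fin m => R i j ω) * ψ0 (R 0 m ω) := by
      intro ω
      rw [hGdef]
      have harg : (fun i j : Fin m => R ((ρ (Fin.castSucc i) : Fin (m+1)) : ℕ)
            ((ρ (Fin.castSucc j) : Fin (m+1)) : ℕ) ω)
          = fun i j : Fin m => R ((τ i : Fin m) : ℕ) ((τ j : Fin m) : ℕ) ω := by
        funext i j
        rw [hval i, hval j]
      simp only
      rw [harg, hswapl, hlast]
      rfl
    have e3 : ∀ ω, G (fun i j : Fin (m+1) => R i j ω)
        = h (fun i j : Fin m => R i j ω) * ψ0 (R l m ω) := by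
      intro ω
      rw [hGdef]
      simp only [Fin.coe_castSucc, Fin.val_last]
      rfl
    rw [integral_congr_ae (Filter.Eventually.of_forall e2),
        integral_congr_ae (Filter.Eventually.of_forall e3)] at e1
    -- apply K0 to hτ
    have e4 := K0 m hm hτ hτmeas ⟨C, hτbdd⟩ hτsupp
    -- exchange at level m for hτ
    have e5 : ∫ ω, hτ (fun i j : Fin m => R i j ω) ∂ℙ
        = ∫ ω, h (fun i j : Fin m => R i j ω) ∂ℙ := by
      have := exch_integral ℙ R hmeas hexch m τ h hmeas'
      rw [← this]
    rw [← e1, e4, e5]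
  have hR00 : ∀ ω, R 0 0 ω = qk := fun ω => (hR 0 0 ω).trans (hsphere 0 ω)
  -- pointwise decomposition
  have Dpt : ∀ (m : ℕ), 2 ≤ m → ∀ (h : (Fin m → Fin m → ℝ) → ℝ),
      (∀ x, x ∉ Dset qk m → h x = 0) → ∀ (φ : ℝ → ℝ) (ω : Ω),
      h (fun i j : Fin m => R i j ω) * φ (R 0 m ω)
        = h (fun i j : Fin m => R i j ω)
            * Set.indicator (distinctEvent σ (m+1)) (fun _ => (1:ℝ)) ω * φ (R 0 m ω)
          + ∑ l ∈ Finset.range m,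
              h (fun i j : Fin m => R i j ω) * ψ0 (R l m ω) * φ (R 0 l ω) := by
    intro m hm h hsupp φ ω
    by_cases hz : h (fun i j : Fin m => R i j ω) = 0
    · simp [hz]
    · have hD : (fun i j : Fin m => R i j ω) ∈ Dset qk m := by
        by_contra hc; exact hz (hsupp _ hc)
      have hAm : ω ∈ distinctEvent σ m := (hDchar m ω).2 hD
      by_cases hex : ∃ l0 : Fin m, σ (l0 : ℕ) ω = σ m ω
      · obtain ⟨l0, hl0⟩ := hex
        have hnA : ω ∉ distinctEvent σ (m+1) := by
          intro hA'
          exact hA' l0 m (l0.isLt.trans (Nat.lt_succ_self m)) (Nat.lt_succ_self m)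
            (Nat.ne_of_lt l0.isLt) hl0
        rw [Set.indicator_of_notMem hnA]
        have hsum : ∑ l ∈ Finset.range m,
            h (fun i j : Fin m => R i j ω) * ψ0 (R l m ω) * φ (R 0 l ω)
            = h (fun i j : Fin m => R i j ω) * φ (R 0 m ω) := by
          rw [Finset.sum_eq_single_of_mem (l0 : ℕ) (Finset.mem_range.mpr l0.isLt)]
          · have hq : R (l0 : ℕ) m ω = qk := (heq _ m (Nat.ne_of_lt l0.isLt) ω).2 hl0
            have hφeq : R 0 (l0 : ℕ) ω = R 0 m ω := by
              rw [hR, hR, hl0]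
            rw [hq, hψ0qk, hφeq, mul_one]
          · intro l hl hne
            have hlm : l < m := Finset.mem_range.mp hl
            have hRne : R l m ω ≠ qk := by
              intro hq
              have hσ : σ l ω = σ m ω := (heq l m (Nat.ne_of_lt hlm) ω).1 hq
              exact hAm l (l0 : ℕ) hlm l0.isLt (by simpa using hne) (hσ.trans hl0.symm)
            rw [hψ0ne hRne, mul_zero, zero_mul]
        rw [hsum]; ring
      · push_neg at hex
        have hA' : ω ∈ distinctEvent σ (m+1) := by
          intro i j hi hj hij hσ
          rcases Nat.lt_succ_iff_lt_or_eq.mp hi with hi' | hi'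
          · rcases Nat.lt_succ_iff_lt_or_eq.mp hj with hj' | hj'
            · exact hAm i j hi' hj' hij hσ
            · exact hex ⟨i, hi'⟩ (by rw [hj'] at hσ; exact hσ)
          · rcases Nat.lt_succ_iff_lt_or_eq.mp hj with hj' | hj'
            · exact hex ⟨j, hj'⟩ (by rw [hi'] at hσ; exact hσ.symm)
            · exact hij (hi'.trans hj'.symm)
        rw [Set.indicator_of_mem hA']
        have hsum : ∑ l ∈ Finset.range m,
            h (fun i j : Fin m => R i j ω) * ψ0 (R l m ω) * φ (R 0 l ω) = 0 := by
          apply Finset.sum_eq_zero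
          intro l hl
          have hlm : l < m := Finset.mem_range.mp hl
          have hRne : R l m ω ≠ qk := by
            intro hq
            exact hex ⟨l, hlm⟩ ((heq l m (Nat.ne_of_lt hlm) ω).1 hq)
          rw [hψ0ne hRne, mul_zero, zero_mul]
        rw [hsum]; ring
  -- the master identity
  have M : ∀ (m : ℕ), 2 ≤ m → ∀ (h : (Fin m → Fin m → ℝ) → ℝ), Measurable h →
      (∃ C, ∀ x, |h x| ≤ C) → (∀ x, x ∉ Dset qk m → h x = 0) →
      ∀ (φ : ℝ → ℝ), Measurable φ → (∃ C, ∀ x, |φ x| ≤ C) →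
      ∫ ω, h (fun i j : Fin m => R i j ω)
          * Set.indicator (distinctEvent σ (m+1)) (fun _ => (1:ℝ)) ω * φ (R 0 m ω) ∂ℙ
        = 1/m * (∫ ω, h (fun i j : Fin m => R i j ω) ∂ℙ)
              * ((∫ ω, φ (R 0 1 ω) ∂ℙ) - pr * φ qk)
          + (1 - pr)/m * ∑ l ∈ Finset.Ico 1 m,
              ∫ ω, h (fun i j : Fin m => R i j ω) * φ (R 0 l ω) ∂ℙ := by
    intro m hm h hmeas' hbdd hsupp φ hφmeas hφbdd
    obtain ⟨C, hC⟩ := hbdd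
    obtain ⟨Cφ, hCφ⟩ := hφbdd
    have h0m : 0 < m := by omega
    have hcomp : Measurable (fun ω => h (fun i j : Fin m => R i j ω)) :=
      hmeas'.comp (RmMeas m)
    have hIAmeas : Measurable (Set.indicator (distinctEvent σ (m+1)) (fun _ => (1:ℝ))) :=
      measurable_const.indicator (hAmeas (m+1))
    have hIAbdd : ∀ ω, |Set.indicator (distinctEvent σ (m+1)) (fun _ => (1:ℝ)) ω| ≤ 1 := by
      intro ω
      by_cases hω : ω ∈ distinctEvent σ (m+1) <;>
        simp [Set.indicator_apply, hω]
    have i1 : Integrable (fun ω => h (fun i j : Fin m => R i j ω)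
        * Set.indicator (distinctEvent σ (m+1)) (fun _ => (1:ℝ)) ω * φ (R 0 m ω)) ℙ := by
      apply hInt _ ((hcomp.mul hIAmeas).mul (hφmeas.comp (hmeas 0 m))) (C * 1 * Cφ)
      intro ω
      exact abs_mul_le (abs_mul_le (hC _) (hIAbdd _)) (hCφ _)
    have i2 : ∀ l : ℕ, Integrable (fun ω => h (fun i j : Fin m => R i j ω)
        * ψ0 (R l m ω) * φ (R 0 l ω)) ℙ := by
      intro l
      apply hInt _ ((hcomp.mul (hψ0meas.comp (hmeas l m))).mul (hφmeas.comp (hmeas 0 l)))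
        (C * 1 * Cφ)
      intro ω
      exact abs_mul_le (abs_mul_le (hC _) (hψ0bdd _)) (hCφ _)
    have key : ∫ ω, h (fun i j : Fin m => R i j ω) * φ (R 0 m ω) ∂ℙ
        = (∫ ω, h (fun i j : Fin m => R i j ω)
             * Set.indicator (distinctEvent σ (m+1)) (fun _ => (1:ℝ)) ω * φ (R 0 m ω) ∂ℙ)
          + ∑ l ∈ Finset.range m,
              ∫ ω, h (fun i j : Fin m => R i j ω) * ψ0 (R l m ω) * φ (R 0 l ω) ∂ℙ := by
      rw [← integral_finset_sum _ (fun l _ => i2 l), ← integral_add i1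
        (integrable_finset_sum _ (fun l _ => i2 l))]
      exact integral_congr_ae (Filter.Eventually.of_forall (Dpt m hm h hsupp φ))
    have hKl : ∀ l, l < m →
        ∫ ω, h (fun i j : Fin m => R i j ω) * ψ0 (R l m ω) * φ (R 0 l ω) ∂ℙ
          = pr / m * ∫ ω, h (fun i j : Fin m => R i j ω) * φ (R 0 l ω) ∂ℙ := by
      intro l hlm
      set hl' : (Fin m → Fin m → ℝ) → ℝ :=
        fun x => h x * φ (x ⟨0, h0m⟩ ⟨l, hlm⟩) with hl'def
      have hl'meas : Measurable hl' :=
        hmeas'.mul (hφmeas.comp (measurable_eval _ _))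
      have hl'bdd : ∀ x, |hl' x| ≤ C * Cφ := fun x => abs_mul_le (hC x) (hCφ _)
      have hl'supp : ∀ x, x ∉ Dset qk m → hl' x = 0 := by
        intro x hx; rw [hl'def]; simp only; rw [hsupp x hx, zero_mul]
      have e : ∀ ω, h (fun i j : Fin m => R i j ω) * ψ0 (R l m ω) * φ (R 0 l ω)
          = hl' (fun i j : Fin m => R i j ω) * ψ0 (R l m ω) := by
        intro ω; rw [hl'def]; ring
      have e2 : (fun ω => hl' (fun i j : Fin m => R i j ω))
          = fun ω => h (fun i j : Fin m => R i j ω) * φ (R 0 l ω) := rfl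
      rw [integral_congr_ae (Filter.Eventually.of_forall e),
        K1 m hm hl' hl'meas ⟨C * Cφ, hl'bdd⟩ hl'supp l hlm, e2]
    have hsum0 : ∫ ω, h (fun i j : Fin m => R i j ω) * φ (R 0 0 ω) ∂ℙ
        = (∫ ω, h (fun i j : Fin m => R i j ω) ∂ℙ) * φ qk := by
      rw [← integral_mul_const]
      exact integral_congr_ae (Filter.Eventually.of_forall (fun ω => by simp only; rw [hR00 ω]))
    have hGGres := hGG m hm h hmeas' ⟨C, hC⟩ φ hφmeas ⟨Cφ, hCφ⟩
    rw [Finset.sum_congr rfl (fun l hl => hKl l (Finset.mem_range.mp hl)),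
      Finset.range_eq_Ico, Finset.sum_eq_sum_Ico_succ_bot h0m, hsum0,
      ← Finset.mul_sum] at key
    linear_combination hGGres - key
  -- the measure of A 2
  have hA2 : distinctEvent σ 2 = {ω | R 0 1 ω = qk}ᶜ := by
    ext ω
    constructor
    · intro h hq
      exact h 0 1 (by omega) (by omega) (by omega) ((heq 0 1 (by omega) ω).1 hq)
    · intro h i j hi hj hij hσ
      have hcases : (i = 0 ∧ j = 1) ∨ (i = 1 ∧ j = 0) := by omega
      rcases hcases with ⟨hi0, hj1⟩ | ⟨hi1, hj0⟩
      · subst hi0; subst hj1; exact h ((heq 0 1 (by omega) ω).2 hσ)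
      · subst hi1; subst hj0; exact h ((heq 0 1 (by omega) ω).2 hσ.symm)
  have hPm2 : (ℙ (distinctEvent σ 2)).toReal = 1 - pr := by
    rw [hA2, measure_compl hsetmeas (measure_ne_top _ _), measure_univ,
      ENNReal.toReal_sub_of_le prob_le_one ENNReal.one_ne_top, ENNReal.toReal_one, hprdef]
  -- indicator bridges
  have hFkIA : ∀ (m : ℕ) (ω : Ω),
      Set.indicator (Dset qk m) (fun _ => (1:ℝ)) (fun i j : Fin m => R i j ω)
        = Set.indicator (distinctEvent σ m) (fun _ => (1:ℝ)) ω := by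
    intro m ω
    by_cases hω : ω ∈ distinctEvent σ m
    · rw [Set.indicator_of_mem hω, Set.indicator_of_mem ((hDchar m ω).1 hω)]
    · rw [Set.indicator_of_notMem hω,
        Set.indicator_of_notMem (fun hD => hω ((hDchar m ω).2 hD))]
  have hIAint : ∀ m : ℕ, ∫ ω, Set.indicator (distinctEvent σ m) (fun _ => (1:ℝ)) ω ∂ℙ
      = (ℙ (distinctEvent σ m)).toReal := by
    intro m
    rw [integral_indicator_const (1:ℝ) (hAmeas m), smul_eq_mul, mul_one]
    rfl
  -- recursion
  have hrec : ∀ m, 2 ≤ m →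
      (ℙ (distinctEvent σ (m+1))).toReal = (1 - pr) * (ℙ (distinctEvent σ m)).toReal := by
    intro m hm
    have hm0 : (m : ℝ) ≠ 0 := Nat.cast_ne_zero.mpr (by omega)
    set Fk : (Fin m → Fin m → ℝ) → ℝ := Set.indicator (Dset qk m) (fun _ => (1:ℝ)) with hFkdef
    have hFkmeas : Measurable Fk := measurable_const.indicator (Dset_measurable qk m)
    have hFkbdd : ∀ x, |Fk x| ≤ 1 := by
      intro x
      by_cases hx : x ∈ Dset qk m <;> simp [hFkdef, Set.indicator_apply, hx]
    have hFksupp : ∀ x , x ∉ Dset qk m → Fk x = 0 := fun x hx => Set.indicator_of_notMem hx _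
    have hMres := M m hm Fk hFkmeas ⟨1, hFkbdd⟩ hFksupp (fun _ => (1:ℝ)) measurable_const
      ⟨1, by norm_num⟩
    have hL : ∀ ω, Fk (fun i j : Fin m => R i j ω)
        * Set.indicator (distinctEvent σ (m+1)) (fun _ => (1:ℝ)) ω * (1:ℝ)
        = Set.indicator (distinctEvent σ (m+1)) (fun _ => (1:ℝ)) ω := by
      intro ω
      rw [hFkdef, hFkIA m ω, mul_one]
      by_cases hω : ω ∈ distinctEvent σ (m+1)
      · rw [Set.indicator_of_mem hω, Set.indicator_of_mem (hAmono m hω), one_mul]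
      · rw [Set.indicator_of_notMem hω, mul_zero]
    have hFkint : ∀ ω, Fk (fun i j : Fin m => R i j ω) * (1:ℝ)
        = Set.indicator (distinctEvent σ m) (fun _ => (1:ℝ)) ω := by
      intro ω; rw [mul_one, hFkdef, hFkIA m ω]
    rw [integral_congr_ae (Filter.Eventually.of_forall hL)] at hMres
    rw [integral_congr_ae (Filter.Eventually.of_forall
      (fun ω => by rw [hFkdef, hFkIA m ω] : ∀ ω, Fk (fun i j : Fin m => R i j ω)
        = Set.indicator (distinctEvent σ m) (fun _ => (1:ℝ)) ω))] at hMres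
    rw [Finset.sum_congr rfl (fun l _ => integral_congr_ae
      (Filter.Eventually.of_forall hFkint))] at hMres
    rw [hIAint (m+1), hIAint m, integral_const, probReal_univ, one_smul,
      Finset.sum_const, Nat.card_Ico, nsmul_eq_mul] at hMres
    rw [hMres]
    have hcast : ((m - 1 : ℕ) : ℝ) = (m : ℝ) - 1 := by
      rw [Nat.cast_sub (by omega), Nat.cast_one]
    rw [hcast]
    field_simp
    ring
  -- positivity
  have hApos : ∀ m : ℕ, 2 ≤ m → 0 < (ℙ (distinctEvent σ m)).toReal := by
    intro m hm
    induction m, hm using Nat.le_induction with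
    | base => rw [hPm2]; linarith
    | succ m hm ih => rw [hrec m hm]; exact mul_pos (by linarith) ih
  -- transfer lemma
  have hprojMeas : ∀ m : ℕ, Measurable (fun x : ℕ → ℕ → ℝ => fun i j : Fin m => x i j) :=
    fun m => measurable_pi_lambda _ fun i => measurable_pi_lambda _ fun j =>
      (measurable_pi_apply _).comp (measurable_pi_apply _)
  have T : ∀ m : ℕ, 2 ≤ m → ∀ G : (Fin m → Fin m → ℝ) → ℝ, Measurable G →
      ∫ ω, G (fun i j : Fin m => R i j ω)
          * Set.indicator (distinctEvent σ m) (fun _ => (1:ℝ)) ω ∂ℙ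
        = (ℙ (distinctEvent σ m)).toReal * ∫ x, G (fun i j : Fin m => x i j) ∂μ := by
    intro m hm G hG
    have h1 : ∫ x, G (fun i j : Fin m => x i j) ∂μ
        = ∫ y, G y ∂(Measure.map (fun x : ℕ → ℕ → ℝ => fun i j : Fin m => x i j) μ) :=
      (integral_map (hprojMeas m).aemeasurable hG.aestronglyMeasurable).symm
    rw [hμ m, integral_smul_measure,
      integral_map (RmMeas m).aemeasurable hG.aestronglyMeasurable] at h1
    have h2 : ∫ ω, G (fun i j : Fin m => R i j ω) ∂(ℙ.restrict (distinctEvent σ m))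
        = ∫ ω, G (fun i j : Fin m => R i j ω)
            * Set.indicator (distinctEvent σ m) (fun _ => (1:ℝ)) ω ∂ℙ := by
      rw [← integral_indicator (hAmeas m)]
      apply integral_congr_ae
      apply Filter.Eventually.of_forall
      intro ω
      by_cases hω : ω ∈ distinctEvent σ m
      · simp only [Set.indicator_of_mem hω, mul_one]
      · simp only [Set.indicator_of_notMem hω, mul_zero]
    rw [h2] at h1
    rw [h1, ENNReal.toReal_inv, smul_eq_mul]
    have hPne : (ℙ (distinctEvent σ m)).toReal ≠ 0 := (hApos m hm).ne'
    field_simp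
  -- a.e. boundedness of entries under μ
  have hae : ∀ i j : ℕ, ∀ᵐ x ∂μ, |x i j| ≤ qk := by
    intro i j
    set m := max i j + 1 with hmdef
    have him : i < m := by omega
    have hjm : j < m := by omega
    rw [ae_iff]
    have hS0 : MeasurableSet {y : Fin m → Fin m → ℝ | |y ⟨i, him⟩ ⟨j, hjm⟩| ≤ qk} :=
      measurableSet_le (measurable_abs.comp (measurable_eval _ _)) measurable_const
    have hS : MeasurableSet {y : Fin m → Fin m → ℝ | ¬ |y ⟨i, him⟩ ⟨j, hjm⟩| ≤ qk} := by
      rw [← Set.compl_setOf]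
      exact hS0.compl
    have hpre : {x : ℕ → ℕ → ℝ | ¬ |x i j| ≤ qk}
        = (fun x : ℕ → ℕ → ℝ => fun i' j' : Fin m => x i' j') ⁻¹'
            {y : Fin m → Fin m → ℝ | ¬ |y ⟨i, him⟩ ⟨j, hjm⟩| ≤ qk} := rfl
    rw [hpre, ← Measure.map_apply (hprojMeas m) hS, hμ m, Measure.smul_apply,
      Measure.map_apply (RmMeas m) hS]
    have hemp : (fun ω => fun i' j' : Fin m => R i' j' ω) ⁻¹'
        {y : Fin m → Fin m → ℝ | ¬ |y ⟨i, him⟩ ⟨j, hjm⟩| ≤ qk} = ∅ := by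
      ext ω
      simp only [Set.mem_preimage, Set.mem_setOf_eq, Set.mem_empty_iff_false, iff_false,
        not_not]
      exact Rbd i j ω
    rw [hemp]
    simp
  -- ====== final assembly ======
  obtain ⟨Cf, hCf⟩ := hfb
  haveI : NeZero n := ⟨by omega⟩
  have hnR : (n : ℝ) ≠ 0 := Nat.cast_ne_zero.mpr (by omega)
  -- clamped power function
  set ψcl : ℝ → ℝ := fun t => (max (-qk) (min qk t))^p with hψcldef
  have hψclmeas : Measurable ψcl :=
    ((continuous_const.max (continuous_const.min continuous_id)).pow p).measurable
  have hclabs : ∀ t : ℝ, |max (-qk) (min qk t)| ≤ qk := by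
    intro t
    rw [abs_le]
    exact ⟨le_max_left _ _, max_le (by linarith) (min_le_left _ _)⟩
  have hψclbdd : ∀ t, |ψcl t| ≤ qk ^ p := by
    intro t
    rw [hψcldef]
    simp only
    rw [abs_pow]
    exact pow_le_pow_left₀ (abs_nonneg _) (hclabs t) p
  have hψclqk : ψcl qk = qk ^ p := by
    rw [hψcldef]
    simp only
    rw [clamp_eq (by rw [abs_of_nonneg qk0])]
  have hclae : ∀ (g : (ℕ → ℕ → ℝ) → ℝ) (i j : ℕ),
      ∫ x, g x * ψcl (x i j) ∂μ = ∫ x, g x * (x i j) ^ p ∂μ := by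
    intro g i j
    apply integral_congr_ae
    filter_upwards [hae i j] with x hx
    rw [hψcldef]
    simp only
    rw [clamp_eq hx]
  have hclae1 : ∀ i j : ℕ, ∫ x, ψcl (x i j) ∂μ = ∫ x, (x i j) ^ p ∂μ := by
    intro i j
    apply integral_congr_ae
    filter_upwards [hae i j] with x hx
    rw [hψcldef]
    simp only
    rw [clamp_eq hx]
  -- the function h = f * indicator
  set hF : (Fin n → Fin n → ℝ) → ℝ :=
    fun x => f x * Set.indicator (Dset qk n) (fun _ => (1:ℝ)) x with hFdef
  have hDind : ∀ x : Fin n → Fin n → ℝ, |Set.indicator (Dset qk n) (fun _ => (1:ℝ)) x| ≤ 1 := by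
    intro x
    by_cases hx : x ∈ Dset qk n <;> simp [Set.indicator_apply, hx]
  have hFmeas : Measurable hF := hf.mul (measurable_const.indicator (Dset_measurable qk n))
  have hFbdd : ∀ x, |hF x| ≤ Cf * 1 := fun x => abs_mul_le (hCf x) (hDind x)
  have hFsupp : ∀ x, x ∉ Dset qk n → hF x = 0 := by
    intro x hx
    rw [hFdef]
    simp only
    rw [Set.indicator_of_notMem hx, mul_zero]
  have Mres := M n hn hF hFmeas ⟨Cf * 1, hFbdd⟩ hFsupp ψcl hψclmeas ⟨qk ^ p, hψclbdd⟩
  -- (1) ∫ hF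
  have e1 : ∫ ω, hF (fun i j : Fin n => R i j ω) ∂ℙ
      = (ℙ (distinctEvent σ n)).toReal * ∫ x, f (fun i j : Fin n => x i j) ∂μ := by
    rw [← T n hn f hf]
    apply integral_congr_ae
    apply Filter.Eventually.of_forall
    intro ω
    rw [hFdef]
    simp only
    rw [hFkIA n ω]
  -- (2) the sum terms
  have e2 : ∀ l ∈ Finset.Ico 1 n,
      ∫ ω, hF (fun i j : Fin n => R i j ω) * ψcl (R 0 l ω) ∂ℙ
        = (ℙ (distinctEvent σ n)).toReal
            * ∫ x, f (fun i j : Fin n => x i j) * (x 0 l) ^ p ∂μ := by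
    intro l hl
    obtain ⟨hl1, hln⟩ := Finset.mem_Ico.mp hl
    have h0n : 0 < n := by omega
    set G : (Fin n → Fin n → ℝ) → ℝ := fun y => f y * ψcl (y ⟨0, h0n⟩ ⟨l, hln⟩) with hGdef
    have hGmeas : Measurable G := hf.mul (hψclmeas.comp (measurable_eval _ _))
    have hT := T n hn G hGmeas
    have hL : ∫ ω, hF (fun i j : Fin n => R i j ω) * ψcl (R 0 l ω) ∂ℙ
        = ∫ ω, G (fun i j : Fin n => R i j ω)
            * Set.indicator (distinctEvent σ n) (fun _ => (1:ℝ)) ω ∂ℙ := by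
      apply integral_congr_ae
      apply Filter.Eventually.of_forall
      intro ω
      rw [hFdef, hGdef]
      simp only
      rw [hFkIA n ω]
      ring
    have hRq : ∫ x, G (fun i j : Fin n => x i j) ∂μ
        = ∫ x, f (fun i j : Fin n => x i j) * (x 0 l) ^ p ∂μ := by
      rw [show (fun x : ℕ → ℕ → ℝ => G (fun i j : Fin n => x i j))
          = fun x : ℕ → ℕ → ℝ => f (fun i j : Fin n => x i j) * ψcl (x 0 l) from rfl]
      exact hclae (fun x => f (fun i j : Fin n => x i j)) 0 l
    rw [hL, hT, hRq]
  -- (3) the middle factor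
  have e3 : (∫ ω, ψcl (R 0 1 ω) ∂ℙ) - pr * ψcl qk
      = (1 - pr) * ∫ x, (x 0 1) ^ p ∂μ := by
    set G2 : (Fin 2 → Fin 2 → ℝ) → ℝ :=
      fun y => ψcl (y ⟨0, by omega⟩ ⟨1, by omega⟩) with hG2def
    have hG2meas : Measurable G2 := hψclmeas.comp (measurable_eval _ _)
    have hT := T 2 (by omega) G2 hG2meas
    have hsplitpt : ∀ ω, ψcl (R 0 1 ω)
        = ψcl (R 0 1 ω) * Set.indicator (distinctEvent σ 2) (fun _ => (1:ℝ)) ω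
          + ψcl qk * ψ0 (R 0 1 ω) := by
      intro ω
      by_cases hc : R 0 1 ω = qk
      · have hnA : ω ∉ distinctEvent σ 2 := by
          rw [hA2]
          simp only [Set.mem_compl_iff, not_not]
          exact hc
        rw [Set.indicator_of_notMem hnA, hc, hψ0qk]
        ring
      · have hA : ω ∈ distinctEvent σ 2 := by
          rw [hA2]
          exact hc
        rw [Set.indicator_of_mem hA, hψ0ne hc]
        ring
    have ia : Integrable (fun ω => ψcl (R 0 1 ω)
        * Set.indicator (distinctEvent σ 2) (fun _ => (1:ℝ)) ω) ℙ := by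
      apply hInt _ ((hψclmeas.comp (hmeas 0 1)).mul
        (measurable_const.indicator (hAmeas 2))) (qk ^ p * 1)
      intro ω
      apply abs_mul_le (hψclbdd _)
      by_cases hω : ω ∈ distinctEvent σ 2 <;> simp [Set.indicator_apply, hω]
    have ib : Integrable (fun ω => ψcl qk * ψ0 (R 0 1 ω)) ℙ := by
      apply hInt _ (measurable_const.mul (hψ0meas.comp (hmeas 0 1))) (|ψcl qk| * 1)
      intro ω
      exact abs_mul_le (le_refl _) (hψ0bdd _)
    have hsplit : ∫ ω, ψcl (R 0 1 ω) ∂ℙ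
        = (∫ ω, ψcl (R 0 1 ω) * Set.indicator (distinctEvent σ 2) (fun _ => (1:ℝ)) ω ∂ℙ)
          + ψcl qk * pr := by
      rw [← hψ0int, ← integral_const_mul, ← integral_add ia ib]
      exact integral_congr_ae (Filter.Eventually.of_forall hsplitpt)
    have hTL : ∫ ω, G2 (fun i j : Fin 2 => R i j ω)
        * Set.indicator (distinctEvent σ 2) (fun _ => (1:ℝ)) ω ∂ℙ
        = ∫ ω, ψcl (R 0 1 ω) * Set.indicator (distinctEvent σ 2) (fun _ => (1:ℝ)) ω ∂ℙ := rfl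
    have hTR : ∫ x, G2 (fun i j : Fin 2 => x i j) ∂μ = ∫ x, (x 0 1) ^ p ∂μ := by
      rw [show (fun x : ℕ → ℕ → ℝ => G2 (fun i j : Fin 2 => x i j))
          = fun x : ℕ → ℕ → ℝ => ψcl (x 0 1) from rfl]
      exact hclae1 0 1
    rw [hTL, hPm2, hTR] at hT
    linear_combination hsplit + hT
  -- (4) the left-hand side
  have h0n1 : 0 < n + 1 := by omega
  have hnn1 : n < n + 1 := by omega
  set G' : (Fin (n+1) → Fin (n+1) → ℝ) → ℝ :=
    fun y => f (fun i j : Fin n => y (Fin.castSucc i) (Fin.castSucc j))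
      * ψcl (y ⟨0, h0n1⟩ ⟨n, hnn1⟩) with hG'def
  have hG'meas : Measurable G' := by
    apply Measurable.mul
    · exact hf.comp (measurable_pi_lambda _ fun i => measurable_pi_lambda _ fun j =>
        measurable_eval _ _)
    · exact hψclmeas.comp (measurable_eval _ _)
  have e4 : ∫ ω, hF (fun i j : Fin n => R i j ω)
      * Set.indicator (distinctEvent σ (n+1)) (fun _ => (1:ℝ)) ω * ψcl (R 0 n ω) ∂ℙ
      = ∫ ω, G' (fun i j : Fin (n+1) => R i j ω)
          * Set.indicator (distinctEvent σ (n+1)) (fun _ => (1:ℝ)) ω ∂ℙ := by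
    apply integral_congr_ae
    apply Filter.Eventually.of_forall
    intro ω
    have hsub : (fun i j : Fin n =>
        R ((Fin.castSucc i : Fin (n+1)) : ℕ) ((Fin.castSucc j : Fin (n+1)) : ℕ) ω)
        = fun i j : Fin n => R i j ω := by
      funext i j
      rw [Fin.coe_castSucc, Fin.coe_castSucc]
    rw [hFdef, hG'def]
    simp only
    rw [hFkIA n ω, hsub]
    by_cases hω : ω ∈ distinctEvent σ (n+1)
    · rw [Set.indicator_of_mem hω, Set.indicator_of_mem (hAmono n hω)]
      ring
    · rw [Set.indicator_of_notMem hω]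
      ring
  have hT4 := T (n+1) (by omega) G' hG'meas
  have hR4 : ∫ x, G' (fun i j : Fin (n+1) => x i j) ∂μ
      = ∫ x, f (fun i j : Fin n => x i j) * (x 0 n) ^ p ∂μ := by
    have hG'x : (fun x : ℕ → ℕ → ℝ => G' (fun i j : Fin (n+1) => x i j))
        = fun x : ℕ → ℕ → ℝ => f (fun i j : Fin n => x i j) * ψcl (x 0 n) := by
      funext x
      rw [hG'def]
      simp only
      congr 1
    rw [hG'x]
    exact hclae (fun x => f (fun i j : Fin n => x i j)) 0 n
  rw [e4, hT4, hR4] at Mres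
  rw [e1, e3, Finset.sum_congr rfl e2, ← Finset.mul_sum, hrec n hn] at Mres
  have hc : ((1 - pr) * (ℙ (distinctEvent σ n)).toReal) ≠ 0 :=
    (mul_pos (by linarith) (hApos n hn)).ne'
  refine mul_left_cancel₀ hc ?_
  rw [Mres]
  ring
end

section
/- Suppose R is an ultrametric random array (R_{2,3} ≥ min(R_{1,2},R_{1,3}) a.s. for all triples, in the exchangeable sense) satisfying the Ghirlanda–Guerra identities, and let q be such that P(R_{1,2} < q) > 0. Let A_{n,q} = {R_{l,l'} < q for all 1 ≤ l < l' ≤ n} and P_{n,q} the law of R^n conditioned on A_{n,q}. Then the family (P_{n,q}) is consistent and for every set B of 3×3 matrices, P_{n,q}(R^3 ∈ B) = P_{3,q}(R^3 ∈ B) for all n ≥ 3. -/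
open MeasureTheory

/-- The event that all overlaps among the first `n` replicas are `< q`. -/
def belowEvent {Ω : Type*} (R : ℕ → ℕ → Ω → ℝ) (q : ℝ) (n : ℕ) : Set Ω :=
  {ω | ∀ i j, i < j → j < n → R i j ω < q}

lemma aux_int_bdd {Ω : Type*} [MeasurableSpace Ω] (ℙ : Measure Ω) [IsProbabilityMeasure ℙ]
    {h : Ω → ℝ} (hm : Measurable h) {C : ℝ} (hb : ∀ ω, |h ω| ≤ C) : Integrable h ℙ := by
  refine (integrable_const C).mono' hm.aestronglyMeasurable ?_
  filter_upwards with ω using by simpa [Real.norm_eq_abs] using hb ω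

lemma aux_indicator_abs_le {α : Type*} (s : Set α) (x : α) :
    |Set.indicator s (fun _ => (1:ℝ)) x| ≤ 1 := by
  by_cases hx : x ∈ s <;> simp [Set.indicator_apply, hx]

lemma aux_int_ind {Ω : Type*} [MeasurableSpace Ω] (μ : Measure Ω) {s : Set Ω}
    (hs : MeasurableSet s) : ∫ ω, Set.indicator s (fun _ => (1:ℝ)) ω ∂μ = (μ s).toReal :=
  integral_indicator_one hs

lemma aux_exch {Ω : Type*} [MeasurableSpace Ω] (ℙ : Measure Ω)
    (R : ℕ → ℕ → Ω → ℝ) (hmeas : ∀ l l', Measurable (fun ω => R l l' ω))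
    (hexch : ∀ (m : ℕ) (ρ : Equiv.Perm (Fin m)),
      Measure.map (fun ω => fun i j : Fin m => R (ρ i) (ρ j) ω) ℙ
        = Measure.map (fun ω => fun i j : Fin m => R i j ω) ℙ)
    (m : ℕ) (ρ : Equiv.Perm (Fin m)) (G : (Fin m → Fin m → ℝ) → ℝ) (hG : Measurable G) :
    ∫ ω, G (fun i j : Fin m => R (ρ i) (ρ j) ω) ∂ℙ = ∫ ω, G (fun i j : Fin m => R i j ω) ∂ℙ := by
  have h1 : Measurable (fun ω => fun i j : Fin m => R (ρ i) (ρ j) ω) :=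
    measurable_pi_lambda _ fun i => measurable_pi_lambda _ fun j => hmeas _ _
  have h2 : Measurable (fun ω => fun i j : Fin m => R (i:ℕ) (j:ℕ) ω) :=
    measurable_pi_lambda _ fun i => measurable_pi_lambda _ fun j => hmeas _ _
  rw [← integral_map h1.aemeasurable hG.aestronglyMeasurable,
      ← integral_map h2.aemeasurable hG.aestronglyMeasurable, hexch m ρ]

def AnS (q : ℝ) (n : ℕ) : Set (Fin n → Fin n → ℝ) := {x | ∀ i j : Fin n, i ≠ j → x i j < q}

lemma aux_AnS_meas (q : ℝ) (n : ℕ) : MeasurableSet (AnS q n) := by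
  have : AnS q n = ⋂ (i : Fin n), ⋂ (j : Fin n), ⋂ (_ : i ≠ j), {x | x i j < q} := by
    ext x; simp [AnS]
  rw [this]
  refine MeasurableSet.iInter fun i => MeasurableSet.iInter fun j => MeasurableSet.iInter fun _ => ?_
  exact measurableSet_lt ((measurable_pi_apply i).comp measurable_id |>.eval) measurable_const

lemma aux_AnS_perm (q : ℝ) (n : ℕ) (τ : Equiv.Perm (Fin n)) (x : Fin n → Fin n → ℝ) :
    (fun i j => x (τ i) (τ j)) ∈ AnS q n ↔ x ∈ AnS q n := by
  constructor
  · intro h i j hij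
    have := h (τ.symm i) (τ.symm j) (by simpa using fun e => hij (τ.symm.injective e))
    simpa using this
  · intro h i j hij
    exact h _ _ (fun e => hij (τ.injective e))

lemma aux_below_iff {Ω : Type*} (R : ℕ → ℕ → Ω → ℝ) (hsymm : ∀ l l' ω, R l l' ω = R l' l ω)
    (q : ℝ) (n : ℕ) (ω : Ω) :
    ω ∈ belowEvent R q n ↔ (fun i j : Fin n => R i j ω) ∈ AnS q n := by
  constructor
  · intro h i j hij
    rcases lt_trichotomy (i : ℕ) (j : ℕ) with hc | hc | hc
    · exact h i j hc j.isLt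
    · exact absurd (Fin.ext hc) hij
    · simp only []; rw [hsymm]; exact h j i hc i.isLt
  · intro h i j hij hjn
    have := h ⟨i, lt_trans hij hjn⟩ ⟨j, hjn⟩ (by simp [Fin.ext_iff]; omega)
    simpa using this

lemma aux_below_meas {Ω : Type*} [MeasurableSpace Ω] (R : ℕ → ℕ → Ω → ℝ)
    (hmeas : ∀ l l', Measurable (fun ω => R l l' ω)) (q : ℝ) (n : ℕ) :
    MeasurableSet (belowEvent R q n) := by
  have : belowEvent R q n
      = ⋂ (i : ℕ), ⋂ (j : ℕ), ⋂ (_ : i < j), ⋂ (_ : j < n), {ω | R i j ω < q} := by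
    ext ω; simp [belowEvent]
  rw [this]
  refine MeasurableSet.iInter fun i => MeasurableSet.iInter fun j =>
    MeasurableSet.iInter fun _ => MeasurableSet.iInter fun _ => ?_
  exact measurableSet_lt (hmeas i j) measurable_const

lemma aux_decomp {Ω : Type*} (R : ℕ → ℕ → Ω → ℝ) (q : ℝ) (n : ℕ)
    (hsymm : ∀ l l' ω, R l l' ω = R l' l ω) (ω : Ω)
    (hu : ∀ i j l : ℕ, i ≠ j → j ≠ l → i ≠ l → min (R i j ω) (R i l ω) ≤ R j l ω) :
    Set.indicator (belowEvent R q (n+1)) (fun _ => (1:ℝ)) ω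
      = Set.indicator (belowEvent R q n) (fun _ => (1:ℝ)) ω
        - ∑ l : Fin n, Set.indicator (belowEvent R q n) (fun _ => (1:ℝ)) ω
            * Set.indicator (Set.Ici q) (fun _ => (1:ℝ)) (R l n ω) := by
  by_cases hA : ω ∈ belowEvent R q n
  · by_cases hA' : ω ∈ belowEvent R q (n+1)
    · have hz : ∀ l : Fin n, Set.indicator (Set.Ici q) (fun _ => (1:ℝ)) (R l n ω) = 0 := by
        intro l
        have : R l n ω < q := hA' l n l.isLt (Nat.lt_succ_self n)
        simp [Set.indicator_apply, Set.mem_Ici, not_le.mpr this]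
      simp [Set.indicator_of_mem hA, Set.indicator_of_mem hA', hz]
    · -- exactly one l with R l n ω ≥ q
      obtain ⟨l0, hl0n, hl0⟩ : ∃ l, l < n ∧ q ≤ R l n ω := by
        by_contra hcon
        push_neg at hcon
        apply hA'
        intro i j hij hjn
        rcases Nat.lt_or_ge j n with hj | hj
        · exact hA i j hij hj
        · have hjn' : j = n := by omega
          subst hjn'
          exact lt_of_not_ge fun hle => absurd hle (not_le.mpr (hcon i hij))
      have huniq : ∀ l : ℕ, l < n → q ≤ R l n ω → l = l0 := by
        intro l hln hl
        by_contra hne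
        have hmin := hu n l l0 (by omega) hne (by omega)
        rw [hsymm n l, hsymm n l0] at hmin
        have : q ≤ R l l0 ω := le_trans (le_min hl hl0) hmin
        rcases Nat.lt_or_ge l l0 with hc | hc
        · exact absurd (hA l l0 hc hl0n) (not_lt.mpr this)
        · have : q ≤ R l0 l ω := by rwa [hsymm]
          exact absurd (hA l0 l (by omega) hln) (not_lt.mpr this)
      have hsum : ∑ l : Fin n, Set.indicator (belowEvent R q n) (fun _ => (1:ℝ)) ω
            * Set.indicator (Set.Ici q) (fun _ => (1:ℝ)) (R l n ω) = 1 := by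
        rw [Finset.sum_eq_single_of_mem ⟨l0, hl0n⟩ (Finset.mem_univ _)]
        · simp [Set.indicator_of_mem hA, Set.indicator_of_mem (Set.mem_Ici.mpr hl0)]
        · intro b _ hb
          have : ¬ q ≤ R b n ω := fun hle => hb (Fin.ext (huniq b b.isLt hle))
          simp [Set.indicator_apply, Set.mem_Ici, this]
      rw [hsum]
      simp [Set.indicator_of_mem hA, Set.indicator_of_notMem hA']
  · have hA' : ω ∉ belowEvent R q (n+1) := fun h => hA fun i j hij hjn => h i j hij (by omega)
    simp [Set.indicator_of_notMem hA, Set.indicator_of_notMem hA']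

section Key
variable {Ω : Type*} [MeasurableSpace Ω] (ℙ : Measure Ω) [IsProbabilityMeasure ℙ]
    (R : ℕ → ℕ → Ω → ℝ) (q : ℝ)

lemma aux_ind_eq (hsymm : ∀ l l' ω, R l l' ω = R l' l ω) (n : ℕ) (ω : Ω) :
    Set.indicator (belowEvent R q n) (fun _ => (1:ℝ)) ω
      = Set.indicator (AnS q n) (fun _ => (1:ℝ)) (fun i j : Fin n => R i j ω) := by
  by_cases h : ω ∈ belowEvent R q n
  · rw [Set.indicator_of_mem h,
      Set.indicator_of_mem ((aux_below_iff R hsymm q n ω).mp h)]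
  · rw [Set.indicator_of_notMem h,
      Set.indicator_of_notMem (fun h' => h ((aux_below_iff R hsymm q n ω).mpr h'))]

lemma aux_key
    (hmeas : ∀ l l', Measurable (fun ω => R l l' ω))
    (hsymm : ∀ l l' ω, R l l' ω = R l' l ω)
    (hexch : ∀ (m : ℕ) (ρ : Equiv.Perm (Fin m)),
      Measure.map (fun ω => fun i j : Fin m => R (ρ i) (ρ j) ω) ℙ
        = Measure.map (fun ω => fun i j : Fin m => R i j ω) ℙ)
    (hultra : ∀ᵐ ω ∂ℙ, ∀ i j l : ℕ, i ≠ j → j ≠ l → i ≠ l →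
      min (R i j ω) (R i l ω) ≤ R j l ω)
    (hGG : ∀ m, 2 ≤ m → ∀ f : (Fin m → Fin m → ℝ) → ℝ, Measurable f →
      (∃ C, ∀ x, |f x| ≤ C) → ∀ ψ : ℝ → ℝ, Measurable ψ → (∃ C, ∀ x, |ψ x| ≤ C) →
      ∫ ω, f (fun i j : Fin m => R i j ω) * ψ (R 0 m ω) ∂ℙ
        = (1 / m) * (∫ ω, f (fun i j : Fin m => R i j ω) ∂ℙ)
              * (∫ ω, ψ (R 0 1 ω) ∂ℙ)
          + (1 / m) * ∑ l ∈ Finset.Ico 1 m,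
              ∫ ω, f (fun i j : Fin m => R i j ω) * ψ (R 0 l ω) ∂ℙ)
    (n : ℕ) (hn : 2 ≤ n) (f : (Fin n → Fin n → ℝ) → ℝ) (hf : Measurable f)
    (C : ℝ) (hC : ∀ x, |f x| ≤ C) :
    ∫ ω, f (fun i j : Fin n => R i j ω)
        * Set.indicator (belowEvent R q (n + 1)) (fun _ => (1 : ℝ)) ω ∂ℙ
      = (∫ ω, f (fun i j : Fin n => R i j ω)
          * Set.indicator (belowEvent R q n) (fun _ => (1 : ℝ)) ω ∂ℙ)
        * (1 - ∫ ω, Set.indicator (Set.Ici q) (fun _ => (1:ℝ)) (R 0 1 ω) ∂ℙ) := by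
  haveI : NeZero n := ⟨by omega⟩
  set ψ : ℝ → ℝ := Set.indicator (Set.Ici q) (fun _ => (1:ℝ)) with hψdef
  have hψm : Measurable ψ := measurable_const.indicator measurableSet_Ici
  have hψb : ∀ x, |ψ x| ≤ 1 := fun x => aux_indicator_abs_le _ _
  have hC0 : 0 ≤ C := le_trans (abs_nonneg _) (hC (fun _ _ => 0))
  have hMmeas : ∀ m : ℕ, Measurable (fun ω => fun i j : Fin m => R i j ω) :=
    fun m => measurable_pi_lambda _ fun i => measurable_pi_lambda _ fun j => hmeas _ _
  set γ : ℝ := ∫ ω, ψ (R 0 1 ω) ∂ℙ with hγdef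
  set I : ℝ := ∫ ω, f (fun i j : Fin n => R i j ω)
      * Set.indicator (AnS q n) (fun _ => (1:ℝ)) (fun i j : Fin n => R i j ω) ∂ℙ with hIdef
  -- the J computation
  have Jcalc : ∀ l : Fin n,
      ∫ ω, f (fun i j : Fin n => R i j ω)
          * Set.indicator (AnS q n) (fun _ => (1:ℝ)) (fun i j : Fin n => R i j ω)
          * ψ (R l n ω) ∂ℙ
        = (1 / n) * I * γ := by
    intro l
    set τ : Equiv.Perm (Fin n) := Equiv.swap 0 l with hτdef
    set fτ : (Fin n → Fin n → ℝ) → ℝ := fun y => f (fun i j => y (τ i) (τ j)) with hfτdef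
    have hfτm : Measurable fτ :=
      hf.comp (measurable_pi_lambda _ fun i => measurable_pi_lambda _ fun j =>
        (measurable_pi_apply (τ j)).comp (measurable_pi_apply (τ i)))
    have hfτb : ∀ x, |fτ x| ≤ C := fun x => hC _
    set ρ : Equiv.Perm (Fin (n+1)) := Equiv.swap 0 l.castSucc with hρdef
    have hcast : ∀ i : Fin n, ρ i.castSucc = (τ i).castSucc := by
      intro i
      rcases eq_or_ne i 0 with h | h
      · subst h; simp [hρdef, hτdef]
      · rcases eq_or_ne i l with h2 | h2
        · subst h2
          simp [hρdef, hτdef]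
        · rw [hρdef, hτdef, Equiv.swap_apply_of_ne_of_ne, Equiv.swap_apply_of_ne_of_ne h h2]
          · simpa using h
          · simpa [Fin.castSucc_inj] using h2
    have hρ0 : ρ 0 = l.castSucc := Equiv.swap_apply_left _ _
    have hρlast : ρ (Fin.last n) = Fin.last n := by
      apply Equiv.swap_apply_of_ne_of_ne
      · simp [Fin.ext_iff]; omega
      · exact (Fin.castSucc_lt_last l).ne'
    -- matrix identities
    have eswap : ∀ ω : Ω, (fun i j : Fin n =>
        R ((τ (τ i) : Fin n) : ℕ) ((τ (τ j) : Fin n) : ℕ) ω)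
        = fun i j : Fin n => R (i : ℕ) (j : ℕ) ω := by
      intro ω; funext i j
      rw [hτdef, Equiv.swap_apply_self, Equiv.swap_apply_self]
    have eind : ∀ ω : Ω,
        Set.indicator (AnS q n) (fun _ => (1:ℝ))
            (fun i j : Fin n => R ((τ i : Fin n) : ℕ) ((τ j : Fin n) : ℕ) ω)
          = Set.indicator (AnS q n) (fun _ => (1:ℝ)) (fun i j : Fin n => R (i:ℕ) (j:ℕ) ω) := by
      intro ω
      by_cases hA : (fun i j : Fin n => R (i:ℕ) (j:ℕ) ω) ∈ AnS q n
      · rw [Set.indicator_of_mem ((aux_AnS_perm q n τ _).mpr hA), Set.indicator_of_mem hA]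
      · rw [Set.indicator_of_notMem (fun h => hA ((aux_AnS_perm q n τ _).mp h)),
          Set.indicator_of_notMem hA]
    -- step (i): exchangeability at level n+1
    set G : (Fin (n+1) → Fin (n+1) → ℝ) → ℝ := fun x =>
      fτ (fun i j : Fin n => x i.castSucc j.castSucc)
        * Set.indicator (AnS q n) (fun _ => (1:ℝ)) (fun i j : Fin n => x i.castSucc j.castSucc)
        * ψ (x 0 (Fin.last n)) with hGdef
    have hrestr : Measurable (fun x : Fin (n+1) → Fin (n+1) → ℝ =>
        fun i j : Fin n => x i.castSucc j.castSucc) :=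
      measurable_pi_lambda _ fun i => measurable_pi_lambda _ fun j =>
        (measurable_pi_apply _).comp (measurable_pi_apply _)
    have hGm : Measurable G := by
      exact ((hfτm.comp hrestr).mul
        ((measurable_const.indicator (aux_AnS_meas q n)).comp hrestr)).mul
        (hψm.comp ((measurable_pi_apply (Fin.last n)).comp (measurable_pi_apply 0)))
    have step1 := aux_exch ℙ R hmeas hexch (n+1) ρ G hGm
    have hLHS : (fun ω => G (fun i j : Fin (n+1) => R (ρ i) (ρ j) ω))
        = fun ω => f (fun i j : Fin n => R i j ω)
            * Set.indicator (AnS q n) (fun _ => (1:ℝ)) (fun i j : Fin n => R i j ω)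
            * ψ (R l n ω) := by
      funext ω
      simp only [hGdef]
      have e1 : (fun i j : Fin n =>
            R ((ρ i.castSucc : Fin (n+1)) : ℕ) ((ρ j.castSucc : Fin (n+1)) : ℕ) ω)
          = fun i j : Fin n => R ((τ i : Fin n) : ℕ) ((τ j : Fin n) : ℕ) ω := by
        funext i j; rw [hcast, hcast, Fin.coe_castSucc, Fin.coe_castSucc]
      rw [e1, hρ0, hρlast, eind ω]
      simp only [hfτdef]
      rw [eswap ω]
      simp
    have hRHS : (fun ω => G (fun i j : Fin (n+1) => R i j ω))
        = fun ω => fτ (fun i j : Fin n => R i j ω)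
            * Set.indicator (AnS q n) (fun _ => (1:ℝ)) (fun i j : Fin n => R i j ω)
            * ψ (R 0 n ω) := by
      funext ω
      simp [hGdef]
    rw [hLHS, hRHS] at step1
    -- step (ii): GG applied to fτ * indicator
    have hg : Measurable (fun x => fτ x * Set.indicator (AnS q n) (fun _ => (1:ℝ)) x) :=
      hfτm.mul (measurable_const.indicator (aux_AnS_meas q n))
    have hgb : ∀ x, |fτ x * Set.indicator (AnS q n) (fun _ => (1:ℝ)) x| ≤ C := by
      intro x
      rw [abs_mul]
      calc |fτ x| * |Set.indicator (AnS q n) (fun _ => (1:ℝ)) x| ≤ C * 1 :=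
        mul_le_mul (hfτb x) (aux_indicator_abs_le _ _) (abs_nonneg _) hC0
      _ = C := mul_one C
    have step2 := hGG n hn _ hg ⟨C, hgb⟩ ψ hψm ⟨1, hψb⟩
    -- step (iii): sum terms vanish
    have hzero : ∀ l' ∈ Finset.Ico 1 n,
        ∫ ω, (fun x => fτ x * Set.indicator (AnS q n) (fun _ => (1:ℝ)) x)
            (fun i j : Fin n => R i j ω) * ψ (R 0 l' ω) ∂ℙ = 0 := by
      intro l' hl'
      rw [Finset.mem_Ico] at hl'
      have hz : ∀ ω, (fun x => fτ x * Set.indicator (AnS q n) (fun _ => (1:ℝ)) x)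
          (fun i j : Fin n => R i j ω) * ψ (R 0 l' ω) = 0 := by
        intro ω
        by_cases hA : (fun i j : Fin n => R (i:ℕ) (j:ℕ) ω) ∈ AnS q n
        · have hlt : R 0 l' ω < q := by
            have := hA ⟨0, by omega⟩ ⟨l', hl'.2⟩ (by simp [Fin.ext_iff]; omega)
            simpa using this
          have hψ0 : ψ (R 0 l' ω) = 0 := by
            simp [hψdef, Set.indicator_apply, Set.mem_Ici, not_le.mpr hlt]
          simp [hψ0]
        · simp [Set.indicator_of_notMem hA]
      simp [hz]
    rw [Finset.sum_congr rfl hzero] at step2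
    -- step (iv): ∫ fτ * ind = I
    have step4 : (∫ ω, (fun x => fτ x * Set.indicator (AnS q n) (fun _ => (1:ℝ)) x)
        (fun i j : Fin n => R i j ω) ∂ℙ) = I := by
      have he := aux_exch ℙ R hmeas hexch n τ
        (fun x => fτ x * Set.indicator (AnS q n) (fun _ => (1:ℝ)) x) hg
      rw [hIdef, ← he]
      apply integral_congr_ae
      filter_upwards with ω
      simp only [hfτdef]
      rw [eswap ω, eind ω]
    rw [step1, step2, step4]
    simp [hγdef]
  -- assemble
  have hIB : ∫ ω, f (fun i j : Fin n => R i j ω)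
      * Set.indicator (belowEvent R q n) (fun _ => (1:ℝ)) ω ∂ℙ = I := by
    rw [hIdef]
    apply integral_congr_ae
    filter_upwards with ω
    rw [aux_ind_eq R q hsymm n ω]
  have hJB : ∀ l : Fin n, ∫ ω, f (fun i j : Fin n => R i j ω)
      * Set.indicator (belowEvent R q n) (fun _ => (1:ℝ)) ω * ψ (R l n ω) ∂ℙ
      = (1 / n) * I * γ := by
    intro l
    rw [← Jcalc l]
    apply integral_congr_ae
    filter_upwards with ω
    rw [aux_ind_eq R q hsymm n ω]
  have hae : ∀ᵐ ω ∂ℙ, f (fun i j : Fin n => R i j ω)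
        * Set.indicator (belowEvent R q (n+1)) (fun _ => (1:ℝ)) ω
      = f (fun i j : Fin n => R i j ω)
          * Set.indicator (belowEvent R q n) (fun _ => (1:ℝ)) ω
        - ∑ l : Fin n, f (fun i j : Fin n => R i j ω)
            * Set.indicator (belowEvent R q n) (fun _ => (1:ℝ)) ω * ψ (R l n ω) := by
    filter_upwards [hultra] with ω hu
    rw [aux_decomp R q n hsymm ω hu, mul_sub, Finset.mul_sum]
    simp only [mul_assoc, hψdef]
  have hint1 : Integrable (fun ω => f (fun i j : Fin n => R i j ω)
      * Set.indicator (belowEvent R q n) (fun _ => (1:ℝ)) ω) ℙ := by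
    apply aux_int_bdd ℙ ((hf.comp (hMmeas n)).mul
      (measurable_const.indicator (aux_below_meas R hmeas q n))) (C := C)
    intro ω
    rw [Pi.mul_apply, abs_mul]
    calc |f _| * |Set.indicator (belowEvent R q n) (fun _ => (1:ℝ)) ω| ≤ C * 1 :=
      mul_le_mul (hC _) (aux_indicator_abs_le _ _) (abs_nonneg _) hC0
    _ = C := mul_one C
  have hint2 : ∀ l : Fin n, Integrable (fun ω => f (fun i j : Fin n => R i j ω)
      * Set.indicator (belowEvent R q n) (fun _ => (1:ℝ)) ω * ψ (R l n ω)) ℙ := by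
    intro l
    apply aux_int_bdd ℙ (((hf.comp (hMmeas n)).mul
      (measurable_const.indicator (aux_below_meas R hmeas q n))).mul
      (hψm.comp (hmeas l n))) (C := C)
    intro ω
    rw [Pi.mul_apply, Pi.mul_apply, abs_mul, abs_mul]
    calc |f _| * |Set.indicator (belowEvent R q n) (fun _ => (1:ℝ)) ω| * |ψ (R l n ω)|
        ≤ C * 1 * 1 := by
          refine mul_le_mul (mul_le_mul (hC _) (aux_indicator_abs_le _ _)
            (abs_nonneg _) hC0) (hψb _) (abs_nonneg _) (by positivity)
    _ = C := by ring
  rw [integral_congr_ae hae, integral_sub hint1 (integrable_finset_sum _ fun l _ => hint2 l),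
    integral_finset_sum _ (fun l _ => hint2 l), hIB]
  rw [Finset.sum_congr rfl (fun l _ => hJB l)]
  rw [Finset.sum_const, Finset.card_univ, Fintype.card_fin, nsmul_eq_mul]
  have hn0 : (n : ℝ) ≠ 0 := by positivity
  field_simp
end Key

/-- if the array `R` is ultrametric (a.s., for all triples) and satisfies
the Ghirlanda–Guerra identities, and `P(R₁₂ < q) > 0`, then the conditional laws
`P_{n,q}` of `Rⁿ` given `A_{n,q} = {R_{l,l'} < q, ∀ l < l' ≤ n}` are consistent, and the
conditional law of the `3 × 3` matrix `R³` given `A_{n,q}` equals `P_{3,q}` for all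
`n ≥ 3`. -/
theorem ultrametric_conditional_consistency
    {Ω : Type*} [MeasurableSpace Ω] (ℙ : Measure Ω) [IsProbabilityMeasure ℙ]
    (R : ℕ → ℕ → Ω → ℝ) (q : ℝ)
    (hmeas : ∀ l l', Measurable (fun ω => R l l' ω))
    (hsymm : ∀ l l' ω, R l l' ω = R l' l ω)
    (hdiag : ∀ l ω, R l l ω = 1)
    (hpsd : ∀ᵐ ω ∂ℙ, ∀ n : ℕ,
      Matrix.PosSemidef (Matrix.of fun i j : Fin n => R i j ω))
    (hexch : ∀ (m : ℕ) (ρ : Equiv.Perm (Fin m)),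
      Measure.map (fun ω => fun i j : Fin m => R (ρ i) (ρ j) ω) ℙ
        = Measure.map (fun ω => fun i j : Fin m => R i j ω) ℙ)
    (hultra : ∀ᵐ ω ∂ℙ, ∀ i j l : ℕ, i ≠ j → j ≠ l → i ≠ l →
      min (R i j ω) (R i l ω) ≤ R j l ω)
    (hq : 0 < ℙ {ω | R 0 1 ω < q})
    (hGG : ∀ m, 2 ≤ m → ∀ f : (Fin m → Fin m → ℝ) → ℝ, Measurable f →
      (∃ C, ∀ x, |f x| ≤ C) → ∀ ψ : ℝ → ℝ, Measurable ψ → (∃ C, ∀ x, |ψ x| ≤ C) →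
      ∫ ω, f (fun i j : Fin m => R i j ω) * ψ (R 0 m ω) ∂ℙ
        = (1 / m) * (∫ ω, f (fun i j : Fin m => R i j ω) ∂ℙ)
              * (∫ ω, ψ (R 0 1 ω) ∂ℙ)
          + (1 / m) * ∑ l ∈ Finset.Ico 1 m,
              ∫ ω, f (fun i j : Fin m => R i j ω) * ψ (R 0 l ω) ∂ℙ) :
    (∀ n, 1 ≤ n → ∀ f : (Fin n → Fin n → ℝ) → ℝ, Measurable f →
      (∃ C, ∀ x, |f x| ≤ C) →
      (∫ ω, f (fun i j : Fin n => R i j ω)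
          * Set.indicator (belowEvent R q (n + 1)) (fun _ => (1 : ℝ)) ω ∂ℙ)
        / (ℙ (belowEvent R q (n + 1))).toReal
      = (∫ ω, f (fun i j : Fin n => R i j ω)
          * Set.indicator (belowEvent R q n) (fun _ => (1 : ℝ)) ω ∂ℙ)
        / (ℙ (belowEvent R q n)).toReal) ∧
    (∀ n, 3 ≤ n → ∀ B : Set (Fin 3 → Fin 3 → ℝ), MeasurableSet B →
      ℙ (belowEvent R q n ∩ {ω | (fun i j : Fin 3 => R i j ω) ∈ B})
          / ℙ (belowEvent R q n)
        = ℙ (belowEvent R q 3 ∩ {ω | (fun i j : Fin 3 => R i j ω) ∈ B})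
            / ℙ (belowEvent R q 3)) := by

  classical
  have hMmeas : ∀ m : ℕ, Measurable (fun ω => fun i j : Fin m => R i j ω) :=
    fun m => measurable_pi_lambda _ fun i => measurable_pi_lambda _ fun j => hmeas _ _
  set p : ℝ := (ℙ {ω | R 0 1 ω < q}).toReal with hpdef
  have hSm : MeasurableSet {ω | R 0 1 ω < q} := measurableSet_lt (hmeas 0 1) measurable_const
  have hppos : 0 < p := ENNReal.toReal_pos hq.ne' (measure_ne_top _ _)
  -- 1 - γ = p
  have hψm : Measurable (Set.indicator (Set.Ici q) (fun _ => (1:ℝ))) :=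
    measurable_const.indicator measurableSet_Ici
  have hpγ : 1 - ∫ ω, Set.indicator (Set.Ici q) (fun _ => (1:ℝ)) (R 0 1 ω) ∂ℙ = p := by
    have h1 : (fun ω => (1:ℝ) - Set.indicator (Set.Ici q) (fun _ => (1:ℝ)) (R 0 1 ω))
        = fun ω => Set.indicator {ω | R 0 1 ω < q} (fun _ => (1:ℝ)) ω := by
      funext ω
      by_cases h : q ≤ R 0 1 ω
      · rw [Set.indicator_of_mem (Set.mem_Ici.mpr h),
          Set.indicator_of_notMem (by simpa [not_lt] using h)]
        ring
      · rw [Set.indicator_of_notMem (by simpa [Set.mem_Ici] using h),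
          Set.indicator_of_mem (by simpa [not_le] using h)]
        ring
    have hint : Integrable (fun ω => Set.indicator (Set.Ici q) (fun _ => (1:ℝ)) (R 0 1 ω)) ℙ :=
      aux_int_bdd ℙ (hψm.comp (hmeas 0 1)) (C := 1) (fun ω => aux_indicator_abs_le _ _)
    calc (1:ℝ) - ∫ ω, Set.indicator (Set.Ici q) (fun _ => (1:ℝ)) (R 0 1 ω) ∂ℙ
        = (∫ (_ : Ω), (1:ℝ) ∂ℙ) - ∫ ω, Set.indicator (Set.Ici q) (fun _ => (1:ℝ)) (R 0 1 ω) ∂ℙ := by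
          simp
      _ = ∫ ω, ((1:ℝ) - Set.indicator (Set.Ici q) (fun _ => (1:ℝ)) (R 0 1 ω)) ∂ℙ :=
          (integral_sub (integrable_const (1:ℝ)) hint).symm
      _ = (ℙ {ω | R 0 1 ω < q}).toReal := by rw [h1]; exact aux_int_ind ℙ hSm
  -- the universal events
  have hA01 : ∀ m, m ≤ 1 → belowEvent R q m = Set.univ := by
    intro m hm
    ext ω
    simp only [belowEvent, Set.mem_setOf_eq, Set.mem_univ, iff_true]
    intro i j hij hjm
    omega
  -- the key recursion
  have key : ∀ n, 1 ≤ n → ∀ f : (Fin n → Fin n → ℝ) → ℝ, Measurable f →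
      (∃ C, ∀ x, |f x| ≤ C) →
      ∫ ω, f (fun i j : Fin n => R i j ω)
          * Set.indicator (belowEvent R q (n + 1)) (fun _ => (1 : ℝ)) ω ∂ℙ
        = (∫ ω, f (fun i j : Fin n => R i j ω)
            * Set.indicator (belowEvent R q n) (fun _ => (1 : ℝ)) ω ∂ℙ) * p := by
    intro n hn f hf hbdd
    obtain ⟨C, hC⟩ := hbdd
    rcases eq_or_lt_of_le hn with hn1 | hn2
    · -- n = 1
      subst hn1
      have hc : ∀ ω, f (fun i j : Fin 1 => R i j ω) = f (fun _ _ => (1:ℝ)) := by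
        intro ω
        refine congrArg f (funext fun i => funext fun j => ?_)
        have hi : (i : ℕ) = 0 := by omega
        have hj : (j : ℕ) = 0 := by omega
        rw [hi, hj, hdiag]
      have hA2 : belowEvent R q 2 = {ω | R 0 1 ω < q} := by
        ext ω
        constructor
        · intro h; exact h 0 1 (by omega) (by omega)
        · intro h i j hij hj2
          have hij' : i = 0 ∧ j = 1 := by omega
          rw [hij'.1, hij'.2]
          exact h
      have e1 : ∫ ω, f (fun i j : Fin 1 => R i j ω)
          * Set.indicator (belowEvent R q 2) (fun _ => (1 : ℝ)) ω ∂ℙ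
          = f (fun _ _ => (1:ℝ)) * p := by
        rw [show (fun ω => f (fun i j : Fin 1 => R i j ω)
            * Set.indicator (belowEvent R q 2) (fun _ => (1 : ℝ)) ω)
          = fun ω => f (fun _ _ => (1:ℝ))
            * Set.indicator (belowEvent R q 2) (fun _ => (1 : ℝ)) ω from
          funext fun ω => by rw [hc ω]]
        rw [MeasureTheory.integral_const_mul, hA2, aux_int_ind ℙ hSm]
      have e2 : ∫ ω, f (fun i j : Fin 1 => R i j ω)
          * Set.indicator (belowEvent R q 1) (fun _ => (1 : ℝ)) ω ∂ℙ
          = f (fun _ _ => (1:ℝ)) := by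
        rw [show (fun ω => f (fun i j : Fin 1 => R i j ω)
            * Set.indicator (belowEvent R q 1) (fun _ => (1 : ℝ)) ω)
          = fun _ => f (fun _ _ => (1:ℝ)) from
          funext fun ω => by rw [hc ω, hA01 1 le_rfl]; simp]
        simp
      rw [e1, e2]
    · rw [aux_key ℙ R q hmeas hsymm hexch hultra hGG n hn2 f hf C hC, hpγ]
  -- measure recursion and positivity
  have hPA : ∀ n, 1 ≤ n →
      (ℙ (belowEvent R q (n+1))).toReal = (ℙ (belowEvent R q n)).toReal * p := by
    intro n hn
    have h := key n hn (fun _ => 1) measurable_const ⟨1, by norm_num⟩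
    simp only [one_mul] at h
    rw [aux_int_ind ℙ (aux_below_meas R hmeas q (n+1)),
      aux_int_ind ℙ (aux_below_meas R hmeas q n)] at h
    exact h
  have hApos : ∀ n, 0 < (ℙ (belowEvent R q n)).toReal := by
    intro n
    induction n with
    | zero => rw [hA01 0 (by omega)]; simp
    | succ k ih =>
      rcases Nat.eq_zero_or_pos k with hk | hk
      · subst hk; rw [hA01 1 le_rfl]; simp
      · rw [hPA k hk]; exact mul_pos ih hppos
  constructor
  · intro n hn f hf hbdd
    rw [key n hn f hf hbdd, hPA n hn, mul_div_mul_right _ _ hppos.ne']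
  · intro n hn B hB
    set Cset : Set Ω := {ω | (fun i j : Fin 3 => R i j ω) ∈ B} with hCdef
    have hCm : MeasurableSet Cset := hMmeas 3 hB
    have hstep : ∀ m (hm : 3 ≤ m),
        (ℙ (belowEvent R q (m+1) ∩ Cset)).toReal
          = (ℙ (belowEvent R q m ∩ Cset)).toReal * p := by
      intro m hm
      set fB : (Fin m → Fin m → ℝ) → ℝ := fun x => Set.indicator B (fun _ => (1:ℝ))
        (fun i j : Fin 3 => x (Fin.castLE hm i) (Fin.castLE hm j)) with hfBdef
      have hfBm : Measurable fB :=
        (measurable_const.indicator hB).comp (measurable_pi_lambda _ fun i =>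
          measurable_pi_lambda _ fun j =>
            (measurable_pi_apply _).comp (measurable_pi_apply _))
      have hkey := key m (by omega) fB hfBm ⟨1, fun x => aux_indicator_abs_le _ _⟩
      have hptwise : ∀ (k : ℕ) (ω : Ω), fB (fun i j : Fin m => R i j ω)
          * Set.indicator (belowEvent R q k) (fun _ => (1:ℝ)) ω
          = Set.indicator (belowEvent R q k ∩ Cset) (fun _ => (1:ℝ)) ω := by
        intro k ω
        have hfBω : fB (fun i j : Fin m => R i j ω)
            = Set.indicator Cset (fun _ => (1:ℝ)) ω := by
          simp only [hfBdef]
          have hmat : (fun i j : Fin 3 =>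
              R ((Fin.castLE hm i : Fin m) : ℕ) ((Fin.castLE hm j : Fin m) : ℕ) ω)
              = fun i j : Fin 3 => R i j ω := by
            funext i j; rw [Fin.coe_castLE, Fin.coe_castLE]
          rw [hmat]
          by_cases hc : ω ∈ Cset
          · have hc' : (fun i j : Fin 3 => R (i:ℕ) (j:ℕ) ω) ∈ B := hc
            rw [Set.indicator_of_mem hc', Set.indicator_of_mem hc]
          · have hc' : (fun i j : Fin 3 => R (i:ℕ) (j:ℕ) ω) ∉ B := hc
            rw [Set.indicator_of_notMem hc', Set.indicator_of_notMem hc]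
        rw [hfBω]
        by_cases h1 : ω ∈ belowEvent R q k <;> by_cases h2 : ω ∈ Cset <;>
          simp [Set.indicator_apply, h1, h2, Set.mem_inter_iff]
      have e1 : ∫ ω, fB (fun i j : Fin m => R i j ω)
          * Set.indicator (belowEvent R q (m+1)) (fun _ => (1:ℝ)) ω ∂ℙ
          = (ℙ (belowEvent R q (m+1) ∩ Cset)).toReal := by
        rw [funext (hptwise (m+1))]
        exact aux_int_ind ℙ ((aux_below_meas R hmeas q (m+1)).inter hCm)
      have e2 : ∫ ω, fB (fun i j : Fin m => R i j ω)
          * Set.indicator (belowEvent R q m) (fun _ => (1:ℝ)) ω ∂ℙ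
          = (ℙ (belowEvent R q m ∩ Cset)).toReal := by
        rw [funext (hptwise m)]
        exact aux_int_ind ℙ ((aux_below_meas R hmeas q m).inter hCm)
      rw [e1, e2] at hkey
      exact hkey
    have hratio : ∀ m, 3 ≤ m →
        (ℙ (belowEvent R q m ∩ Cset)).toReal / (ℙ (belowEvent R q m)).toReal
          = (ℙ (belowEvent R q 3 ∩ Cset)).toReal / (ℙ (belowEvent R q 3)).toReal := by
      intro m hm
      induction m, hm using Nat.le_induction with
      | base => rfl
      | succ k hk ih =>
        rw [hstep k hk, hPA k (by omega), mul_div_mul_right _ _ hppos.ne', ih]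
    have hne : ∀ m, ℙ (belowEvent R q m) ≠ 0 := by
      intro m h
      have := hApos m
      rw [h] at this
      simp at this
    have hfin : ∀ (s : Set Ω) m, ℙ s / ℙ (belowEvent R q m) ≠ ⊤ :=
      fun s m => (ENNReal.div_lt_top (measure_ne_top _ _) (hne m)).ne
    refine (ENNReal.toReal_eq_toReal_iff' (hfin _ n) (hfin _ 3)).mp ?_
    rw [ENNReal.toReal_div, ENNReal.toReal_div]
    exact hratio n hn
end
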